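/- For a ν-tree T with associated pipe dream, the k-th weight vector of the corresponding facet of SC(Q_ν, w_ν) equals the sum of e_i over all pipes i lying above the lattice point p_k, i.e. ω(T,k) = Σ_{i: pipe i above p_k} e_i. -/

import Mathlib

open scoped Classical

/-- Number of east steps (`false`) among the first `k` steps of the lattice path `ν`
(`true` = north step N, `false` = east step E). -/
def ecount (ν : List Bool) (k : ℕ) : ℕ := (ν.take k).count false

/-- Number of north steps (`true`) among the first `k` steps of `ν`. -/
def ncount (ν : List Bool) (k : ℕ) : ℕ := (ν.take k).count true

/-- The set `A_ν` of lattice points weakly above `ν` inside the smallest rectangle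
containing `ν` (the lattice points of the Ferrers diagram `F_ν`). -/
def Anu (ν : List Bool) : Set (ℤ × ℤ) :=
  {p | ∃ k ≤ ν.length, p.1 = (ecount ν k : ℤ) ∧ (ncount ν k : ℤ) ≤ p.2 ∧ p.2 ≤ (ν.count true : ℤ)}

/-- `p` is strictly southwest of `q`. -/
def strictSW (p q : ℤ × ℤ) : Prop := p.1 < q.1 ∧ p.2 < q.2

/-- The lattice points of the smallest axis-parallel rectangle containing `p` and `q`. -/
def rectPts (p q : ℤ × ℤ) : Set (ℤ × ℤ) :=
  {z | min p.1 q.1 ≤ z.1 ∧ z.1 ≤ max p.1 q.1 ∧ min p.2 q.2 ≤ z.2 ∧ z.2 ≤ max p.2 q.2}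

/-- `p` and `q` are ν-incompatible: one is strictly southwest (equivalently, the other is
strictly northeast) of the other and the rectangle they span lies inside `F_ν`. -/
def NuIncompatible (ν : List Bool) (p q : ℤ × ℤ) : Prop :=
  (strictSW p q ∨ strictSW q p) ∧ rectPts p q ⊆ Anu ν

/-- `p` and `q` are ν-compatible. -/
def NuCompatible (ν : List Bool) (p q : ℤ × ℤ) : Prop := ¬ NuIncompatible ν p q

/-- A ν-tree: a maximal collection of pairwise ν-compatible elements of `A_ν`. -/
def IsNuTree (ν : List Bool) (T : Set (ℤ × ℤ)) : Prop :=
  T ⊆ Anu ν ∧ (∀ p ∈ T, ∀ q ∈ T, NuCompatible ν p q) ∧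
    ∀ T', T ⊆ T' → T' ⊆ Anu ν → (∀ p ∈ T', ∀ q ∈ T', NuCompatible ν p q) → T' = T

/-- In the pipe dream `P(T)`, the tile at cell `c` is an elbow iff `c` is a node of `T`
or `c` lies outside the Ferrers diagram `F_ν`; all other tiles are crossings. -/
def tileElbow (ν : List Bool) (T : Set (ℤ × ℤ)) (c : ℤ × ℤ) : Prop := c ∈ T ∨ c ∉ Anu ν

/-- One step of a pipe in the pipe dream `P(T)`.  A state `(c, d)` records the cell `c`
currently being traversed together with the heading `d` (`true` = east, `false` = north)
with which the pipe entered `c`.  An elbow turns the pipe, a crossing lets it through. -/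
noncomputable def pstep (ν : List Bool) (T : Set (ℤ × ℤ)) :
    (ℤ × ℤ) × Bool → (ℤ × ℤ) × Bool := fun s =>
  let d' : Bool := if tileElbow ν T s.1 then !s.2 else s.2
  (cond d' (s.1.1 + 1, s.1.2) (s.1.1, s.1.2 + 1), d')

/-- The trajectory of pipe `i` in `P(T)`: pipes are labeled (from `0`) from top to bottom
on the left edge, pipe `i` entering the leftmost column heading east at height
`(#north steps of ν) - i`. -/
noncomputable def ptraj (ν : List Bool) (T : Set (ℤ × ℤ)) (i : ℕ) (k : ℕ) :
    (ℤ × ℤ) × Bool :=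
  (pstep ν T)^[k] (((0 : ℤ), (ν.count true : ℤ) - (i : ℤ)), true)

/-- Pipe `i` passes above the lattice point `p` (with the Ferrers diagram shifted by
`-(ε,ε)`): the unique cell of the column of `p` that the pipe traverses heading east is
weakly above `p`. -/
def PipeAbove (ν : List Bool) (T : Set (ℤ × ℤ)) (i : ℕ) (p : ℤ × ℤ) : Prop :=
  ∃ k, (ptraj ν T i k).2 = true ∧ (ptraj ν T i k).1.1 = p.1 ∧ p.2 ≤ (ptraj ν T i k).1.2

/-- Pipe `i` passes (strictly) below the lattice point `p`. -/
def PipeBelow (ν : List Bool) (T : Set (ℤ × ℤ)) (i : ℕ) (p : ℤ × ℤ) : Prop :=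
  ∃ k, (ptraj ν T i k).2 = true ∧ (ptraj ν T i k).1.1 = p.1 ∧ (ptraj ν T i k).1.2 < p.2

/-- Pipe `i` enters the cell `c` heading east. -/
def EntersE (ν : List Bool) (T : Set (ℤ × ℤ)) (i : ℕ) (c : ℤ × ℤ) : Prop :=
  ∃ k, ptraj ν T i k = (c, true)

/-- Pipe `i` enters the cell `c` heading north. -/
def EntersN (ν : List Bool) (T : Set (ℤ × ℤ)) (i : ℕ) (c : ℤ × ℤ) : Prop :=
  ∃ k, ptraj ν T i k = (c, false)

/-- An ascent of a ν-tree `T`: a node having a node of `T` to its north and a node of `T`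
to its east. -/
def IsAscent (ν : List Bool) (T : Set (ℤ × ℤ)) (a : ℤ × ℤ) : Prop :=
  a ∈ T ∧ (∃ p ∈ T, p.1 = a.1 ∧ a.2 < p.2) ∧ (∃ r ∈ T, r.2 = a.2 ∧ a.1 < r.1)

/-- The simple transposition `s_{p+1}` of the symmetric group on `Fin N`
(swapping the 0-indexed positions `p` and `p+1`). -/
def simpleT (N p : ℕ) : Equiv.Perm (Fin N) :=
  if h : p + 1 < N then Equiv.swap ⟨p, Nat.lt_of_succ_lt h⟩ ⟨p + 1, h⟩ else 1

/-- The lattice distance `d(p)` from `p` to the top-left corner of `F_ν`. -/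
def distTL (ν : List Bool) (p : ℤ × ℤ) : ℕ := (p.1 + ((ν.count true : ℤ) - p.2)).toNat

/-- The letter of the word `Q_ν` at the lattice point `p`: the simple transposition
`s_{d(p)+1}` (0-indexed: the swap of `d(p)` and `d(p)+1`). -/
def nuLetter (N : ℕ) (ν : List Bool) (p : ℤ × ℤ) : Equiv.Perm (Fin N) :=
  simpleT N (distTL ν p)

/-- The prefix product `∏ Q_{{1,…,k-1}∖I}` of the word `Q_ν` (positions enumerated by
`pos : Fin m → ℤ × ℤ`), over the positions before `k` not in `I`. -/
def nuPrefixPerm (N : ℕ) (ν : List Bool) {m : ℕ} (pos : Fin m → ℤ × ℤ)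
    (I : Finset (Fin m)) (k : Fin m) : Equiv.Perm (Fin N) :=
  (((List.finRange m).filter fun a => decide (a < k ∧ a ∉ I)).map
    fun a => nuLetter N ν (pos a)).prod

/-- The fundamental weight `ω_{d+1} = e_1 + ⋯ + e_{d+1}` (0-indexed coordinates `≤ d`). -/
def fundW (N d : ℕ) : Fin N → ℝ := fun j => if (j : ℕ) ≤ d then 1 else 0

/-- The weight function `ω(I,k) := (∏ Q_{{1,…,k-1}∖I})(ω_{q_k})`, the permutation acting
on `ℝ^N` by permuting coordinates. -/
def weightFn (N : ℕ) (ν : List Bool) {m : ℕ} (pos : Fin m → ℤ × ℤ)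
    (I : Finset (Fin m)) (k : Fin m) : Fin N → ℝ :=
  fun i => fundW N (distTL ν (pos k)) ((nuPrefixPerm N ν pos I k)⁻¹ i)

/-- The brick vector `b(I) := -∑_k ω(I,k)`. -/
noncomputable def brickVec (N : ℕ) (ν : List Bool) {m : ℕ} (pos : Fin m → ℤ × ℤ)
    (I : Finset (Fin m)) : Fin N → ℝ :=
  -∑ k : Fin m, weightFn N ν pos I k

-- Section 1: generic list lemmas
section ListAux
variable {α : Type*} {β : Type*} [Monoid β]

/-- split a filter of an "ordered" list into two blocks -/
theorem filter_split (l : List α) (p q r : α → Bool)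
    (hr : ∀ a ∈ l, r a = (p a || q a)) (hpq : ∀ a ∈ l, ¬(p a = true ∧ q a = true))
    (hord : l.Pairwise fun a b => ¬(q a = true ∧ p b = true)) :
    l.filter r = l.filter p ++ l.filter q := by
  induction l with
  | nil => simp
  | cons a tl ih =>
    have hr' : ∀ b ∈ tl, r b = (p b || q b) := fun b hb => hr b (List.mem_cons_of_mem _ hb)
    have hpq' : ∀ b ∈ tl, ¬(p b = true ∧ q b = true) := fun b hb => hpq b (List.mem_cons_of_mem _ hb)
    have hord' : tl.Pairwise fun a b => ¬(q a = true ∧ p b = true) := hord.of_cons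
    have ihs := ih hr' hpq' hord'
    have hra : r a = (p a || q a) := hr a (List.mem_cons_self)
    by_cases hp : p a = true
    · have hq : q a ≠ true := fun hq => hpq a (List.mem_cons_self) ⟨hp, hq⟩
      simp only [List.filter_cons, hra, hp, Bool.true_or, if_pos, ihs]
      simp [hp, Bool.eq_false_iff.mpr hq]
    · by_cases hq : q a = true
      · -- no p-elements in tl
        have hnop : ∀ b ∈ tl, ¬(p b = true) := fun b hb =>
          fun hpb => (List.pairwise_cons.mp hord).1 b hb ⟨hq, hpb⟩
        have h1 : tl.filter p = [] := List.filter_eq_nil_iff.mpr (fun b hb => by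
          simpa using hnop b hb)
        have h2 : List.filter r tl = List.filter q tl := by
          apply List.filter_congr
          intro b hb
          rw [hr' b hb, Bool.eq_false_iff.mpr (hnop b hb)]
          simp
        simp [List.filter_cons, hra, hp, hq, h1, h2]
      · simp only [List.filter_cons, hra, hp, Bool.eq_false_iff.mpr hq]
        simpa [hp, Bool.eq_false_iff.mpr hq] using ihs

theorem prod_filter_map_eq (l : List α) (g : α → β) (P : α → Bool) :
    ((l.filter P).map g).prod = (l.map fun a => if P a then g a else 1).prod := by
  induction l with
  | nil => simp
  | cons a tl ih =>
    by_cases hp : P a = true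
    · simp [List.filter_cons, hp, ih]
    · simp [List.filter_cons, Bool.eq_false_iff.mpr hp, ih, hp]

end ListAux

theorem prod_fix_le {N : ℕ} (L : List (Equiv.Perm (Fin N))) (d : ℕ)
    (hL : ∀ σ ∈ L, ∀ j : Fin N, (j : ℕ) ≤ d → σ j = j) :
    ∀ j : Fin N, (j : ℕ) ≤ d → L.prod j = j := by
  induction L with
  | nil => simp
  | cons σ tl ih =>
    intro j hj
    have h1 : tl.prod j = j := ih (fun τ hτ => hL τ (List.mem_cons_of_mem _ hτ)) j hj
    simp only [List.prod_cons, Equiv.Perm.mul_apply, h1]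
    exact hL σ (List.mem_cons_self) j hj

theorem simpleT_fix {N u : ℕ} (j : Fin N) (hj : (j : ℕ) < u) : simpleT N u j = j := by
  unfold simpleT
  split
  · apply Equiv.swap_apply_of_ne_of_ne
    · intro h; rw [h] at hj; simp at hj
    · intro h; rw [h] at hj; simp at hj
  · rfl
-- Section 2: structure of Anu
theorem take_sub (ν : List Bool) {k k' : ℕ} (h : k ≤ k') : List.Sublist (ν.take k) (ν.take k') := by
  have : ν.take k = (ν.take k').take k := by rw [List.take_take, Nat.min_eq_left h]
  rw [this]; exact List.take_sublist _ _

theorem ecount_mono (ν : List Bool) {k k' : ℕ} (h : k ≤ k') : ecount ν k ≤ ecount ν k' :=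
  (take_sub ν h).count_le false

theorem ncount_mono (ν : List Bool) {k k' : ℕ} (h : k ≤ k') : ncount ν k ≤ ncount ν k' :=
  (take_sub ν h).count_le true

theorem ecount_le (ν : List Bool) (k : ℕ) : ecount ν k ≤ ν.count false :=
  (List.take_sublist k ν).count_le false

theorem ncount_le (ν : List Bool) (k : ℕ) : ncount ν k ≤ ν.count true :=
  (List.take_sublist k ν).count_le true

theorem ecount_succ (ν : List Bool) (b : Bool) (k : ℕ) :
    ecount (b :: ν) (k+1) = ecount ν k + (if b = false then 1 else 0) := by
  simp only [ecount, List.take_succ_cons, List.count_cons]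
  cases b <;> simp

theorem ecount_surj (ν : List Bool) : ∀ x ≤ ν.count false, ∃ k ≤ ν.length, ecount ν k = x := by
  induction ν with
  | nil => intro x hx; simp at hx; exact ⟨0, by simp [hx, ecount]⟩
  | cons b tl ih =>
    intro x hx
    rcases Nat.eq_zero_or_pos x with h0 | hpos
    · exact ⟨0, by simp [h0, ecount]⟩
    · cases b with
      | false =>
        have : x - 1 ≤ tl.count false := by simp [List.count_cons] at hx; omega
        obtain ⟨k, hk, hek⟩ := ih (x-1) this
        refine ⟨k+1, by simpa using hk, ?_⟩
        rw [ecount_succ, hek]; simp; omega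
      | true =>
        have : x ≤ tl.count false := by simp [List.count_cons] at hx; omega
        obtain ⟨k, hk, hek⟩ := ih x this
        refine ⟨k+1, by simpa using hk, ?_⟩
        rw [ecount_succ, hek]; simp

theorem Anu_bounds (ν : List Bool) {p : ℤ × ℤ} (hp : p ∈ Anu ν) :
    0 ≤ p.1 ∧ p.1 ≤ (ν.count false : ℤ) ∧ 0 ≤ p.2 ∧ p.2 ≤ (ν.count true : ℤ) := by
  obtain ⟨k, hk, h1, h2, h3⟩ := hp
  have e1 := ecount_le ν k
  have e2 := ncount_le ν k
  constructor
  · rw [h1]; positivity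
  refine ⟨by rw [h1]; exact_mod_cast e1, ?_, h3⟩
  calc (0:ℤ) ≤ (ncount ν k : ℤ) := by positivity
    _ ≤ p.2 := h2

theorem Anu_up (ν : List Bool) {x y y' : ℤ} (h : (x, y) ∈ Anu ν) (h1 : y ≤ y')
    (h2 : y' ≤ (ν.count true : ℤ)) : (x, y') ∈ Anu ν := by
  obtain ⟨k, hk, e1, e2, e3⟩ := h
  exact ⟨k, hk, e1, le_trans e2 h1, h2⟩

theorem col_nonempty (ν : List Bool) (x : ℕ) (hx : x ≤ ν.count false) :
    ∃ n : ℕ, ((x:ℤ), (n:ℤ)) ∈ Anu ν := by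
  obtain ⟨k, hk, hek⟩ := ecount_surj ν x hx
  refine ⟨ncount ν k, k, hk, ?_, ?_, ?_⟩
  · show (x:ℤ) = _; exact_mod_cast hek.symm
  · show (ncount ν k : ℤ) ≤ _; exact le_refl _
  · show ((ncount ν k : ℕ) : ℤ) ≤ _; exact_mod_cast ncount_le ν k

/-- bottom row of column `x` of the Ferrers diagram. -/
noncomputable def colBot (ν : List Bool) (x : ℕ) : ℕ :=
  if hx : x ≤ ν.count false then Nat.find (col_nonempty ν x hx) else 0

theorem colBot_mem (ν : List Bool) (x : ℕ) (hx : x ≤ ν.count false) :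
    ((x:ℤ), (colBot ν x : ℤ)) ∈ Anu ν := by
  rw [colBot, dif_pos hx]; exact Nat.find_spec (col_nonempty ν x hx)

theorem mem_col_iff (ν : List Bool) (x : ℕ) (hx : x ≤ ν.count false) (r : ℤ) :
    ((x:ℤ), r) ∈ Anu ν ↔ (colBot ν x : ℤ) ≤ r ∧ r ≤ (ν.count true : ℤ) := by
  constructor
  · intro h
    obtain ⟨k, hk, e1, e2, e3⟩ := h
    simp only at e1 e2 e3
    refine ⟨?_, e3⟩
    have hmem : ((x:ℤ), ((ncount ν k : ℕ):ℤ)) ∈ Anu ν := by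
      refine ⟨k, hk, e1, le_refl _, ?_⟩
      show ((ncount ν k : ℕ) : ℤ) ≤ _; exact_mod_cast ncount_le ν k
    have : colBot ν x ≤ ncount ν k := by
      rw [colBot, dif_pos hx]; exact Nat.find_min' _ hmem
    calc (colBot ν x : ℤ) ≤ (ncount ν k : ℤ) := by exact_mod_cast this
      _ ≤ r := e2
  · intro ⟨h1, h2⟩
    exact Anu_up ν (colBot_mem ν x hx) h1 h2

theorem colBot_le (ν : List Bool) (x : ℕ) (hx : x ≤ ν.count false) :
    colBot ν x ≤ ν.count true := by
  have := (Anu_bounds ν (colBot_mem ν x hx)).2.2.2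
  simpa using this

theorem mem_Anu_iff (ν : List Bool) (p : ℤ × ℤ) :
    p ∈ Anu ν ↔ ∃ x : ℕ, p.1 = (x:ℤ) ∧ x ≤ ν.count false ∧
      (colBot ν x : ℤ) ≤ p.2 ∧ p.2 ≤ (ν.count true : ℤ) := by
  obtain ⟨a, b⟩ := p
  constructor
  · intro h
    have hb := Anu_bounds ν h
    simp only at hb
    have hx : a.toNat ≤ ν.count false := by omega
    refine ⟨a.toNat, by simp; omega, hx, ?_⟩
    have ha : ((a.toNat : ℕ) : ℤ) = a := by omega
    rw [← ha] at h
    exact (mem_col_iff ν _ hx b).mp h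
  · intro ⟨x, h1, h2, h3, h4⟩
    simp only at h1 h3 h4
    rw [show ((a,b) : ℤ×ℤ) = ((x:ℤ), b) by rw [h1]]
    exact (mem_col_iff ν x h2 b).mpr ⟨h3, h4⟩
-- Section 3: row transition map and its characterization
noncomputable def Rrow (C : ℤ → Prop) (r : ℤ) : ℤ :=
  if C r then r
  else if h : ∃ n : ℕ, ¬ C (r + 1 + n) then r + 1 + (Nat.find h : ℤ) else r + 1

theorem exElbow {C : ℤ → Prop} {B : ℤ} (hbd : ∀ t, C t → t ≤ B) (r : ℤ) :
    ∃ n : ℕ, ¬ C (r + 1 + n) := by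
  refine ⟨(B - r).toNat, fun hc => ?_⟩
  have := hbd _ hc
  omega

theorem Rrow_cross {C : ℤ → Prop} {r : ℤ} (h : C r) : Rrow C r = r := by
  rw [Rrow, if_pos h]

theorem Rrow_spec {C : ℤ → Prop} {B : ℤ} (hbd : ∀ t, C t → t ≤ B) {r : ℤ} (hnc : ¬ C r) :
    ¬ C (Rrow C r) ∧ r < Rrow C r ∧ ∀ t, r < t → t < Rrow C r → C t := by
  have hex := exElbow hbd r
  rw [Rrow, if_neg hnc, dif_pos hex]
  refine ⟨Nat.find_spec hex, by omega, fun t h1 h2 => ?_⟩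
  by_contra hct
  have ht : t = r + 1 + (t - r - 1).toNat := by omega
  have := Nat.find_min hex (m := (t - r - 1).toNat) (by omega)
  rw [← ht] at this
  exact this hct

theorem Rrow_unique {C : ℤ → Prop} {B : ℤ} (hbd : ∀ t, C t → t ≤ B) {r q : ℤ} (hnc : ¬ C r)
    (hq : ¬ C q) (h1 : r < q) (h2 : ∀ t, r < t → t < q → C t) : Rrow C r = q := by
  obtain ⟨hs1, hs2, hs3⟩ := Rrow_spec hbd hnc
  rcases lt_trichotomy (Rrow C r) q with h | h | h
  · exact absurd (h2 _ hs2 h) hs1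
  · exact h
  · exact absurd (hs3 _ h1 h) hq

-- Section 4: pipe trajectories
section Pipes
variable (ν : List Bool) (T : Set (ℤ × ℤ))

/-- the crossing tiles of column `x`. -/
def Cross (x : ℕ) (r : ℤ) : Prop := ((x:ℤ), r) ∈ Anu ν ∧ ((x:ℤ), r) ∉ T

theorem elbow_iff (x : ℕ) (r : ℤ) : tileElbow ν T ((x:ℤ), r) ↔ ¬ Cross ν T x r := by
  unfold tileElbow Cross; tauto

theorem Cross_bd (x : ℕ) : ∀ r, Cross ν T x r → r ≤ (ν.count true : ℤ) :=
  fun r hc => (Anu_bounds ν hc.1).2.2.2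

/-- entry row of pipe `i` into column `x`. -/
noncomputable def Erow (i : ℕ) : ℕ → ℤ
  | 0 => (ν.count true : ℤ) - (i : ℤ)
  | x+1 => Rrow (Cross ν T x) (Erow i x)

/-- number of steps to traverse column `x` entering at row `r`. -/
noncomputable def nstep (x : ℕ) (r : ℤ) : ℕ := (Rrow (Cross ν T x) r - r).toNat + 1

/-- time at which pipe `i` enters column `x`. -/
noncomputable def Ktime (i : ℕ) : ℕ → ℕ
  | 0 => 0
  | x+1 => Ktime i x + nstep ν T x (Erow ν T i x)

theorem pstep_east (x r : ℤ) :
    pstep ν T ((x, r), true) = if tileElbow ν T (x, r) then ((x, r+1), false)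
      else ((x+1, r), true) := by
  unfold pstep; split <;> simp_all

theorem pstep_north (x r : ℤ) :
    pstep ν T ((x, r), false) = if tileElbow ν T (x, r) then ((x+1, r), true)
      else ((x, r+1), false) := by
  unfold pstep; split <;> simp_all

theorem traverse_col (x : ℕ) (r : ℤ) :
    ((pstep ν T)^[nstep ν T x r] (((x:ℤ), r), true) = (((x:ℤ)+1, Rrow (Cross ν T x) r), true))
    ∧ ∀ t, 0 < t → t < nstep ν T x r → ((pstep ν T)^[t] (((x:ℤ), r), true)).2 = false := by
  by_cases hc : Cross ν T x r
  · have hR : Rrow (Cross ν T x) r = r := Rrow_cross hc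
    have hn : nstep ν T x r = 1 := by unfold nstep; rw [hR]; simp
    rw [hn, hR]
    constructor
    · simp only [Function.iterate_one, pstep_east]
      rw [if_neg ((not_iff_not.mpr (elbow_iff ν T x r)).mpr (not_not.mpr hc))]
    · intro t h1 h2; omega
  · obtain ⟨hs1, hs2, hs3⟩ := Rrow_spec (Cross_bd ν T x) hc
    set R := Rrow (Cross ν T x) r with hRdef
    have key : ∀ t : ℕ, 0 < t → (t:ℤ) ≤ R - r →
        (pstep ν T)^[t] (((x:ℤ), r), true) = (((x:ℤ), r + t), false) := by
      intro t
      induction t with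
      | zero => intro h; omega
      | succ t ih =>
        intro h1 h2
        rcases Nat.eq_zero_or_pos t with ht0 | htpos
        · subst ht0
          have helb : tileElbow ν T ((x:ℤ), r) := (elbow_iff ν T x r).mpr hc
          show pstep ν T (((x:ℤ), r), true) = _
          rw [pstep_east, if_pos helb]
          norm_num
        · have hstep := ih htpos (by push_cast; push_cast at h2; omega)
          rw [Function.iterate_succ_apply', hstep, pstep_north]
          have hcrt : Cross ν T x (r + t) := hs3 _ (by omega) (by push_cast at h2 ⊢; omega)
          have : ¬ tileElbow ν T ((x:ℤ), r + t) := fun he => (elbow_iff ν T x (r+t)).mp he hcrt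
          rw [if_neg this]
          norm_num
          push_cast
          ring
    have hm : nstep ν T x r = (R - r).toNat + 1 := rfl
    have hmR : r + ((R - r).toNat : ℤ) = R := by omega
    constructor
    · rw [hm, Function.iterate_succ_apply',
        key ((R - r).toNat) (by omega) (by omega), hmR, pstep_north]
      have helb : tileElbow ν T ((x:ℤ), R) := (elbow_iff ν T x R).mpr hs1
      rw [if_pos helb]
    · intro t h1 h2
      rw [key t h1 (by rw [hm] at h2; omega)]

theorem Ktime_succ (i x : ℕ) :
    Ktime ν T i (x+1) = Ktime ν T i x + nstep ν T x (Erow ν T i x) := rfl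

theorem ptraj_K (i : ℕ) : ∀ x : ℕ,
    ptraj ν T i (Ktime ν T i x) = (((x:ℤ), Erow ν T i x), true) := by
  intro x
  induction x with
  | zero => simp [ptraj, Erow, Ktime]
  | succ x ih =>
    rw [Ktime_succ]
    unfold ptraj at ih ⊢
    rw [Nat.add_comm, Function.iterate_add_apply, ih, (traverse_col ν T x (Erow ν T i x)).1]
    have : ((x:ℤ)) + 1 = (((x+1 : ℕ)):ℤ) := by push_cast; ring
    rw [this]
    rfl

theorem ptraj_mid (i x t : ℕ) (h1 : 0 < t) (h2 : t < nstep ν T x (Erow ν T i x)) :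
    (ptraj ν T i (Ktime ν T i x + t)).2 = false := by
  have hK := ptraj_K ν T i x
  unfold ptraj at hK ⊢
  rw [Nat.add_comm, Function.iterate_add_apply, hK]
  exact (traverse_col ν T x _).2 t h1 h2

theorem Ktime_lt (i x : ℕ) : Ktime ν T i x < Ktime ν T i (x+1) := by
  rw [Ktime_succ]; unfold nstep; omega

theorem Ktime_locate (i : ℕ) : ∀ k, ∃ x, Ktime ν T i x ≤ k ∧ k < Ktime ν T i (x+1) := by
  intro k
  induction k with
  | zero => exact ⟨0, le_refl _, by have := Ktime_lt ν T i 0; omega⟩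
  | succ k ih =>
    obtain ⟨x, h1, h2⟩ := ih
    rcases Nat.lt_or_ge (k+1) (Ktime ν T i (x+1)) with h | h
    · exact ⟨x, by omega, h⟩
    · exact ⟨x+1, by omega, by have := Ktime_lt ν T i (x+1); omega⟩

theorem east_char (i k : ℕ) (h : (ptraj ν T i k).2 = true) :
    ∃ x : ℕ, k = Ktime ν T i x := by
  obtain ⟨x, h1, h2⟩ := Ktime_locate ν T i k
  rcases Nat.eq_or_lt_of_le h1 with he | hlt
  · exact ⟨x, he.symm⟩
  · exfalso
    have hkk : k = Ktime ν T i x + (k - Ktime ν T i x) := by omega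
    rw [hkk] at h
    rw [ptraj_mid ν T i x _ (by omega) (by rw [Ktime_succ] at h2; omega)] at h
    simp at h

theorem PipeAbove_iff (i : ℕ) (x : ℕ) (y : ℤ) :
    PipeAbove ν T i ((x:ℤ), y) ↔ y ≤ Erow ν T i x := by
  constructor
  · rintro ⟨k, h1, h2, h3⟩
    obtain ⟨x', he⟩ := east_char ν T i k h1
    subst he
    rw [ptraj_K] at h2 h3
    simp only at h2 h3
    have : x' = x := by exact_mod_cast h2
    subst this; exact h3
  · intro h
    exact ⟨Ktime ν T i x, by rw [ptraj_K], by rw [ptraj_K], by rw [ptraj_K]; exact h⟩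

end Pipes
-- Section 5: the column lemma
noncomputable def colProd (N x h fx n : ℕ) (C : ℤ → Prop) : Equiv.Perm (Fin N) :=
  ((List.range n).map fun t =>
    if C (((fx + t : ℕ) : ℤ)) then simpleT N (x + h - fx - t) else 1).prod

theorem colKey (N x h : ℕ) : ∀ (n fx : ℕ) (C : ℤ → Prop),
    fx + n = h + 1 →
    (∀ r, C r → (fx:ℤ) ≤ r ∧ r ≤ (h:ℤ)) →
    (∀ r, C r → (x:ℤ) + h - r < (N:ℤ) - 1) →
    ∀ j : Fin N,
      Rrow C ((x:ℤ) + h - ((colProd N x h fx n C) j : ℕ)) = (x:ℤ) + 1 + h - (j:ℕ) := by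
  intro n
  induction n with
  | zero =>
    intro fx C hfx hsupp _ j
    have hC : ∀ r, ¬ C r := fun r hc => by have := hsupp r hc; omega
    have hid : colProd N x h fx 0 C = 1 := by simp [colProd]
    rw [hid]
    have hbd : ∀ t, C t → t ≤ (h:ℤ) := fun t ht => (hsupp t ht).2
    simp only [Equiv.Perm.one_apply]
    have hrr : Rrow C ((x:ℤ) + h - ((j:ℕ):ℤ)) = ((x:ℤ) + h - ((j:ℕ):ℤ)) + 1 :=
      Rrow_unique hbd (hC _) (hC _) (by omega) (fun t h1 h2 => by omega)
    rw [hrr]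
    ring
  | succ n ih =>
    intro fx C hfx hsupp hd j
    have hbd : ∀ t, C t → t ≤ (h:ℤ) := fun t ht => (hsupp t ht).2
    set C' : ℤ → Prop := fun r => C r ∧ r ≠ (fx:ℤ) with hC'def
    have hbd' : ∀ t, C' t → t ≤ (h:ℤ) := fun t ht => (hsupp t ht.1).2
    have hsupp' : ∀ r, C' r → ((fx+1:ℕ):ℤ) ≤ r ∧ r ≤ (h:ℤ) := by
      intro r hr
      have h1 := hsupp r hr.1
      have h2 := hr.2
      push_cast
      omega
    have hd' : ∀ r, C' r → (x:ℤ) + h - r < (N:ℤ) - 1 := fun r hr => hd r hr.1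
    have hsplit : colProd N x h fx (n+1) C =
        (if C (fx:ℤ) then simpleT N (x + h - fx) else 1) * colProd N x h (fx+1) n C' := by
      rw [colProd, List.range_succ_eq_map, List.map_cons, List.prod_cons]
      have h0 : (if C (((fx + 0:ℕ)):ℤ) then simpleT N (x + h - fx - 0) else 1)
          = (if C ((fx:ℕ):ℤ) then simpleT N (x + h - fx) else 1) := by norm_num
      rw [h0]
      congr 1
      have hfun : ((fun t => if C (((fx + t:ℕ)):ℤ) then simpleT N (x + h - fx - t) else 1)
            ∘ Nat.succ)
          = (fun t => if C' ((((fx+1) + t:ℕ)):ℤ) then simpleT N (x + h - (fx+1) - t) else 1) := by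
        funext t
        simp only [Function.comp_apply, Nat.succ_eq_add_one]
        have e1 : ((fx + (t+1) : ℕ) : ℤ) = (((fx+1) + t : ℕ) : ℤ) := by push_cast; ring
        have hiff : C (((fx + (t+1) : ℕ)):ℤ) ↔ C' ((((fx+1) + t : ℕ)):ℤ) := by
          rw [← e1]
          unfold C'
          constructor
          · intro hc; refine ⟨hc, ?_⟩; push_cast; omega
          · exact fun hc => hc.1
        have hidx : x + h - fx - (t+1) = x + h - (fx+1) - t := by omega
        rw [hidx]
        by_cases hcc : C (((fx + (t+1) : ℕ)):ℤ)
        · rw [if_pos hcc, if_pos (hiff.mp hcc)]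
        · rw [if_neg hcc, if_neg (fun hcc' => hcc (hiff.mpr hcc'))]
      rw [List.map_map, hfun, colProd]
      congr
      funext t
      congr
    by_cases hcfx : C (fx:ℤ)
    · -- crossing at the bottom row of the window
      have hfxh : fx ≤ h := by omega
      set c : ℕ := x + h - fx with hcdef
      have hcZ : (c:ℤ) = (x:ℤ) + h - fx := by omega
      have hcN : c + 1 < N := by
        have := hd _ hcfx
        omega
      have hsw : simpleT N c = Equiv.swap ⟨c, Nat.lt_of_succ_lt hcN⟩ ⟨c+1, hcN⟩ := by
        rw [simpleT, dif_pos hcN]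
      have ihj := ih (fx+1) C' (by omega) hsupp' hd' j
      set v : Fin N := colProd N x h (fx+1) n C' j with hvdef
      have happ : (colProd N x h fx (n+1) C) j
          = Equiv.swap ⟨c, Nat.lt_of_succ_lt hcN⟩ ⟨c+1, hcN⟩ v := by
        rw [hsplit, if_pos hcfx, Equiv.Perm.mul_apply, hsw, ← hvdef]
      rcases lt_trichotomy (v:ℕ) c with hv | hv | hv
      · -- v < c : swap fixes v ; row > fx
        have hne1 : v ≠ ⟨c, Nat.lt_of_succ_lt hcN⟩ := Fin.ne_of_val_ne (by simp; omega)
        have hne2 : v ≠ ⟨c+1, hcN⟩ := Fin.ne_of_val_ne (by simp; omega)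
        rw [happ, Equiv.swap_apply_of_ne_of_ne hne1 hne2]
        set r' : ℤ := (x:ℤ) + h - ((v:ℕ):ℤ) with hr'def
        have hr'fx : (fx:ℤ) < r' := by omega
        by_cases hcr : C r'
        · have hcr' : C' r' := ⟨hcr, by omega⟩
          rw [Rrow_cross hcr]
          rw [Rrow_cross hcr'] at ihj
          exact ihj
        · have hcr' : ¬ C' r' := fun hc => hcr hc.1
          obtain ⟨q1, q2, q3⟩ := Rrow_spec hbd' hcr'
          rw [Rrow_unique hbd hcr (fun hcq => q1 ⟨hcq, by omega⟩) q2
            (fun t h1 h2 => (q3 t h1 h2).1)]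
          exact ihj
      · -- v = c : swap v = c+1, new row fx - 1
        have hveq : v = ⟨c, Nat.lt_of_succ_lt hcN⟩ := Fin.ext (by simpa using hv)
        rw [happ, hveq, Equiv.swap_apply_left]
        have hgoalrow : (x:ℤ) + h - (((⟨c+1, hcN⟩ : Fin N):ℕ):ℤ) = (fx:ℤ) - 1 := by
          simp only [Fin.val_mk]; omega
        rw [hgoalrow]
        have hrowv : (x:ℤ) + h - ((v:ℕ):ℤ) = (fx:ℤ) := by rw [hv]; omega
        rw [hrowv] at ihj
        have hncfx' : ¬ C' (fx:ℤ) := fun hc => hc.2 rfl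
        obtain ⟨q1, q2, q3⟩ := Rrow_spec hbd' hncfx'
        have hR : Rrow C ((fx:ℤ)-1) = Rrow C' (fx:ℤ) := by
          apply Rrow_unique hbd (by intro hcq; have := hsupp _ hcq; omega)
            (fun hcq => q1 ⟨hcq, by omega⟩) (by omega)
          intro t h1 h2
          rcases eq_or_ne t (fx:ℤ) with he | hne
          · rw [he]; exact hcfx
          · exact (q3 t (by omega) h2).1
        rw [hR]
        exact ihj
      · rcases Nat.eq_or_lt_of_le (Nat.succ_le_of_lt hv) with hv1 | hv1
        · -- v = c+1 : swap v = c, new row fx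
          have hveq : v = ⟨c+1, hcN⟩ := Fin.ext (by simp; omega)
          rw [happ, hveq, Equiv.swap_apply_right]
          have hgoalrow : (x:ℤ) + h - (((⟨c, Nat.lt_of_succ_lt hcN⟩ : Fin N):ℕ):ℤ) = (fx:ℤ) := by
            simp only [Fin.val_mk]; omega
          rw [hgoalrow, Rrow_cross hcfx]
          have hrowv : (x:ℤ) + h - ((v:ℕ):ℤ) = (fx:ℤ) - 1 := by
            rw [hveq]; simp only [Fin.val_mk]; push_cast; omega
          rw [hrowv] at ihj
          have hR : Rrow C' ((fx:ℤ)-1) = (fx:ℤ) := by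
            apply Rrow_unique hbd'
              (fun hc => by have := hsupp' _ hc; push_cast at this; omega)
              (fun hc : C' (fx:ℤ) => hc.2 rfl) (by omega)
            intro t h1 h2; omega
          rw [hR] at ihj
          exact ihj
        · -- v > c+1 : swap fixes v, row < fx - 1
          have hne1 : v ≠ ⟨c, Nat.lt_of_succ_lt hcN⟩ := Fin.ne_of_val_ne (by simp; omega)
          have hne2 : v ≠ ⟨c+1, hcN⟩ := Fin.ne_of_val_ne (by simp; omega)
          rw [happ, Equiv.swap_apply_of_ne_of_ne hne1 hne2]
          set r' : ℤ := (x:ℤ) + h - ((v:ℕ):ℤ) with hr'def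
          have hr'lt : r' < (fx:ℤ) - 1 := by omega
          have hnc : ¬ C r' := by intro hc; have := hsupp _ hc; omega
          have hnc' : ¬ C' r' := fun hc => hnc hc.1
          have hncp1 : ¬ C (r' + 1) := by intro hc; have := hsupp _ hc; omega
          have hncp1' : ¬ C' (r' + 1) := fun hc => hncp1 hc.1
          rw [Rrow_unique hbd' hnc' hncp1' (by omega) (fun t h1 h2 => by omega)] at ihj
          rw [Rrow_unique hbd hnc hncp1 (by omega) (fun t h1 h2 => by omega)]
          exact ihj
    · -- no crossing at the bottom row: C' = C
      have hCeq : C' = C := by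
        funext r
        rw [hC'def]
        simp only [eq_iff_iff]
        constructor
        · exact fun hc => hc.1
        · intro hc
          refine ⟨hc, fun he => hcfx (he ▸ hc)⟩
      rw [hsplit, if_neg hcfx, one_mul, hCeq]
      exact ih (fx+1) C (by omega) (hCeq ▸ hsupp') (fun r hr => hd r hr) j
-- Section 6: the enumeration of lattice points
def lexLT (p q : ℤ × ℤ) : Prop := p.1 < q.1 ∨ (p.1 = q.1 ∧ p.2 < q.2)

instance : IsAntisymm (ℤ × ℤ) lexLT where
  antisymm a b h1 h2 := by unfold lexLT at h1 h2; rcases h1 with h | h <;> rcases h2 with h' | h' <;> (exfalso; omega)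

section Enum
variable {m : ℕ} (ν : List Bool) (pos : Fin m → ℤ × ℤ)

theorem bigPts_sorted
    (hord : ∀ a b : Fin m, a < b ↔
      ((pos a).1 < (pos b).1 ∨ ((pos a).1 = (pos b).1 ∧ (pos a).2 < (pos b).2))) :
    ((List.finRange m).map pos).Pairwise lexLT :=
  (List.pairwise_lt_finRange m).map pos (fun a b hab => (hord a b).mp hab)

theorem lex_pairwise_nodup {l : List (ℤ × ℤ)} (h : l.Pairwise lexLT) : l.Nodup :=
  h.imp (fun {p q} hpq => by unfold lexLT at hpq; intro he; rw [he] at hpq; omega)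

theorem col_list
    (hrange : Set.range pos = Anu ν)
    (hord : ∀ a b : Fin m, a < b ↔
      ((pos a).1 < (pos b).1 ∨ ((pos a).1 = (pos b).1 ∧ (pos a).2 < (pos b).2)))
    (x : ℕ) (hx : x ≤ ν.count false) :
    ((List.finRange m).map pos).filter (fun p => decide (p.1 = (x:ℤ)))
      = (List.range (ν.count true + 1 - colBot ν x)).map
          (fun t => (((x:ℕ):ℤ), ((colBot ν x + t : ℕ):ℤ))) := by
  have hfb := colBot_le ν x hx
  have key : ∀ {l₁ l₂ : List (ℤ × ℤ)}, l₁.Perm l₂ → l₁.Pairwise lexLT → l₂.Pairwise lexLT →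
      l₁ = l₂ := fun hp h1 h2 => hp.eq_of_pairwise (fun a b _ _ h1 h2 => by
        unfold lexLT at h1 h2; rcases h1 with h | h <;> rcases h2 with h' | h' <;> (exfalso; omega)) h1 h2
  apply key
  · rw [List.perm_ext_iff_of_nodup]
    · intro p
      rw [List.mem_filter]
      constructor
      · rintro ⟨hmem, hcol⟩
        rw [decide_eq_true_iff] at hcol
        have hpA : p ∈ Anu ν := by
          rw [← hrange]
          obtain ⟨a, _, ha⟩ := List.mem_map.mp hmem
          exact ⟨a, ha⟩
        have hb := (mem_col_iff ν x hx p.2).mp (by rw [← hcol]; exact (by rcases p with ⟨u,v⟩; exact hpA))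
        rw [List.mem_map]
        refine ⟨(p.2 - colBot ν x).toNat, List.mem_range.mpr (by omega), ?_⟩
        rcases p with ⟨u, v⟩
        simp only at hcol hb ⊢
        rw [Prod.mk.injEq]
        constructor
        · omega
        · push_cast; omega
      · intro hmem
        obtain ⟨t, ht, hpt⟩ := List.mem_map.mp hmem
        rw [List.mem_range] at ht
        have hpA : p ∈ Anu ν := by
          rw [← hpt]
          apply (mem_col_iff ν x hx _).mpr
          constructor
          · push_cast; omega
          · push_cast; omega
        constructor
        · rw [← hrange] at hpA
          obtain ⟨a, ha⟩ := hpA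
          exact List.mem_map.mpr ⟨a, List.mem_finRange a, ha⟩
        · rw [decide_eq_true_iff, ← hpt]
    · exact (lex_pairwise_nodup (bigPts_sorted pos hord)).filter _
    · apply lex_pairwise_nodup
      apply List.Pairwise.map (R := (· < ·)) _ (fun a b hab => ?_) List.pairwise_lt_range
      unfold lexLT
      right
      constructor
      · rfl
      · push_cast; omega
  · exact (bigPts_sorted pos hord).filter _
  · apply List.Pairwise.map (R := (· < ·)) _ (fun a b hab => ?_) List.pairwise_lt_range
    unfold lexLT
    right
    exact ⟨rfl, by push_cast; omega⟩

end Enum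
-- Section 7: the column-start invariant
noncomputable def colPerm (ν : List Bool) (N : ℕ) {m : ℕ} (pos : Fin m → ℤ × ℤ)
    (I : Finset (Fin m)) (x : ℕ) : Equiv.Perm (Fin N) :=
  (((List.finRange m).filter fun a => decide ((pos a).1 < ((x:ℕ):ℤ) ∧ a ∉ I)).map
    fun a => nuLetter N ν (pos a)).prod

theorem sinv (ν : List Bool) (T : Set (ℤ × ℤ)) (N : ℕ) {m : ℕ}
    (pos : Fin m → ℤ × ℤ) (I : Finset (Fin m))
    (hN : ∀ p ∈ Anu ν, distTL ν p + 1 < N)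
    (hrange : Set.range pos = Anu ν)
    (hord : ∀ a b : Fin m, a < b ↔
      ((pos a).1 < (pos b).1 ∨ ((pos a).1 = (pos b).1 ∧ (pos a).2 < (pos b).2)))
    (hI : ∀ k : Fin m, k ∈ I ↔ pos k ∈ T) :
    ∀ x : ℕ, x ≤ ν.count false → ∀ j : Fin N,
      Erow ν T ((colPerm ν N pos I x) j : ℕ) x
        = ((x:ℕ):ℤ) + (ν.count true : ℤ) - ((j:ℕ):ℤ) := by
  intro x
  induction x with
  | zero =>
    intro _ j
    have hnil : ((List.finRange m).filter fun a => decide ((pos a).1 < ((0:ℕ):ℤ) ∧ a ∉ I))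
        = [] := by
      apply List.filter_eq_nil_iff.mpr
      intro a _
      simp only [decide_eq_true_eq]
      rintro ⟨hlt, -⟩
      have : pos a ∈ Anu ν := by rw [← hrange]; exact ⟨a, rfl⟩
      have := (Anu_bounds ν this).1
      omega
    have h1 : colPerm ν N pos I 0 = 1 := by rw [colPerm, hnil]; simp
    rw [h1]
    show Erow ν T (((1 : Equiv.Perm (Fin N)) j : Fin N) : ℕ) 0 = _
    have h2 : ((1 : Equiv.Perm (Fin N)) j) = j := rfl
    rw [h2]
    show (ν.count true : ℤ) - ((j:ℕ):ℤ) = _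
    push_cast
    ring
  | succ x ih =>
    intro hx1 j
    have hx : x ≤ ν.count false := by omega
    set F : ℤ × ℤ → Equiv.Perm (Fin N) := nuLetter N ν with hFdef
    set ρ : Equiv.Perm (Fin N) :=
      (((List.finRange m).filter fun a => decide ((pos a).1 = ((x:ℕ):ℤ) ∧ a ∉ I)).map
        fun a => nuLetter N ν (pos a)).prod with hρdef
    -- split of the prefix permutation
    have hsplit0 : ((List.finRange m).filter fun a => decide ((pos a).1 < ((x+1:ℕ):ℤ) ∧ a ∉ I))
        = ((List.finRange m).filter fun a => decide ((pos a).1 < ((x:ℕ):ℤ) ∧ a ∉ I))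
          ++ ((List.finRange m).filter fun a => decide ((pos a).1 = ((x:ℕ):ℤ) ∧ a ∉ I)) := by
      apply filter_split
      · intro a _
        rw [← Bool.decide_or]
        apply decide_eq_decide.mpr
        have hcast : ((x+1:ℕ):ℤ) = ((x:ℕ):ℤ) + 1 := by push_cast; ring
        rw [hcast]
        constructor
        · rintro ⟨hc, hi⟩
          have : (pos a).1 < ((x:ℕ):ℤ) ∨ (pos a).1 = ((x:ℕ):ℤ) := by omega
          tauto
        · rintro (⟨hc, hi⟩ | ⟨hc, hi⟩)
          · exact ⟨by omega, hi⟩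
          · exact ⟨by omega, hi⟩
      · intro a _
        rintro ⟨h1, h2⟩
        rw [decide_eq_true_eq] at h1 h2
        omega
      · apply (List.pairwise_lt_finRange m).imp
        intro a b hab
        rintro ⟨hqa, hpb⟩
        rw [decide_eq_true_eq] at hqa hpb
        have : b < a := (hord b a).mpr (Or.inl (by omega))
        exact absurd this (lt_asymm hab)
    have hsplit : colPerm ν N pos I (x+1) = colPerm ν N pos I x * ρ := by
      rw [colPerm, hsplit0, List.map_append, List.prod_append, hρdef, colPerm]
    -- identification of ρ with the column product
    set fx := colBot ν x with hfxdef
    set n := ν.count true + 1 - fx with hndef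
    have hfb := colBot_le ν x hx
    have hρcol : ρ = colProd N x (ν.count true) fx n (Cross ν T x) := by
      rw [hρdef]
      have hstep1 : ((List.finRange m).filter fun a => decide ((pos a).1 = ((x:ℕ):ℤ) ∧ a ∉ I))
          = ((List.finRange m).filter fun a =>
              (fun p => decide (p.1 = ((x:ℕ):ℤ) ∧ p ∉ T)) (pos a)) := by
        apply List.filter_congr
        intro a _
        exact decide_eq_decide.mpr (and_congr Iff.rfl (not_congr (hI a)))
      rw [hstep1]
      have hstep2 : (((List.finRange m).filter fun a =>
            (fun p => decide (p.1 = ((x:ℕ):ℤ) ∧ p ∉ T)) (pos a)).map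
              fun a => nuLetter N ν (pos a))
          = ((((List.finRange m).map pos).filter
              (fun p => decide (p.1 = ((x:ℕ):ℤ) ∧ p ∉ T))).map (nuLetter N ν)) := by
        rw [List.filter_map, List.map_map]
        rfl
      rw [hstep2]
      have hstep3 : (((List.finRange m).map pos).filter
            (fun p => decide (p.1 = ((x:ℕ):ℤ) ∧ p ∉ T)))
          = ((((List.finRange m).map pos).filter
              (fun p => decide (p.1 = ((x:ℕ):ℤ)))).filter (fun p => decide (p ∉ T))) := by
        rw [List.filter_filter]
        apply List.filter_congr
        intro p _
        simp only [← Bool.decide_and]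
        exact decide_eq_decide.mpr (by tauto)
      rw [hstep3, col_list ν pos hrange hord x hx, ← hfxdef, ← hndef]
      rw [List.filter_map, List.map_map]
      rw [prod_filter_map_eq]
      rw [colProd]
      congr 1
      apply List.map_congr_left
      intro t ht
      rw [List.mem_range] at ht
      have hth : fx + t ≤ ν.count true := by omega
      have hmem : (((x:ℕ):ℤ), ((fx + t : ℕ):ℤ)) ∈ Anu ν := by
        apply (mem_col_iff ν x hx _).mpr
        constructor
        · push_cast; omega
        · push_cast; omega
      have hiff : ((((x:ℕ):ℤ), ((fx + t : ℕ):ℤ)) ∉ T) ↔ Cross ν T x ((fx + t : ℕ):ℤ) :=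
        ⟨fun hn => ⟨hmem, hn⟩, fun hc => hc.2⟩
      have hletter : nuLetter N ν (((x:ℕ):ℤ), ((fx + t : ℕ):ℤ))
          = simpleT N (x + ν.count true - fx - t) := by
        rw [nuLetter]
        congr 1
        rw [distTL]
        simp only
        omega
      simp only [Function.comp_apply]
      by_cases hc : Cross ν T x ((fx + t : ℕ):ℤ)
      · rw [if_pos (decide_eq_true_iff.mpr (hiff.mpr hc)), if_pos hc]
        exact hletter
      · rw [if_neg (by
          intro hcon
          exact hc (hiff.mp (of_decide_eq_true hcon))), if_neg hc]
    -- apply column key lemma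
    have hkey := colKey N x (ν.count true) n fx (Cross ν T x) (by omega)
      (fun r hc => by
        have := (mem_col_iff ν x hx r).mp hc.1
        exact ⟨this.1, this.2⟩)
      (fun r hc => by
        have h1 := hN _ hc.1
        have h2 := (mem_col_iff ν x hx r).mp hc.1
        rw [distTL] at h1
        simp only at h1
        omega)
      j
    have hEsucc : ∀ i : ℕ, Erow ν T i (x+1) = Rrow (Cross ν T x) (Erow ν T i x) :=
      fun i => rfl
    rw [hsplit]
    have happ : ((colPerm ν N pos I x * ρ) j) = (colPerm ν N pos I x) (ρ j) := rfl
    rw [happ, hEsucc, ih hx (ρ j), ← hρcol] at *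
    rw [hρcol] at hkey
    rw [hkey]
    push_cast
    ring
/-- for a ν-tree `T`, the `k`-th weight vector of the corresponding facet of
`SC(Q_ν, w_ν)` equals the sum of `e_i` over the pipes `i` lying above the lattice point
`p_k`.  Here `pos : Fin m → ℤ × ℤ` enumerates the lattice points of `A_ν` reading columns
left to right and each column bottom to top (the word `Q_ν`), `N` is the number of pipes,
and `I` is the facet corresponding to `T`. -/
theorem weightFn_eq_sum_pipes_above (ν : List Bool) (T : Set (ℤ × ℤ))
    (hT : IsNuTree ν T) (N m : ℕ)
    (hN : ∀ p ∈ Anu ν, distTL ν p + 1 < N)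
    (pos : Fin m → ℤ × ℤ) (hinj : Function.Injective pos)
    (hrange : Set.range pos = Anu ν)
    (hord : ∀ a b : Fin m, a < b ↔
      ((pos a).1 < (pos b).1 ∨ ((pos a).1 = (pos b).1 ∧ (pos a).2 < (pos b).2)))
    (I : Finset (Fin m)) (hI : ∀ k : Fin m, k ∈ I ↔ pos k ∈ T) :
    ∀ k : Fin m, weightFn N ν pos I k =
      ∑ i : Fin N, (if PipeAbove ν T (i : ℕ) (pos k) then Pi.single i (1 : ℝ) else 0) := by
  intro k
  funext i
  -- simplify the right-hand side
  have hRHS : (∑ i' : Fin N, (if PipeAbove ν T (i' : ℕ) (pos k) then Pi.single i' (1:ℝ) else 0)) i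
      = if PipeAbove ν T (i : ℕ) (pos k) then (1:ℝ) else 0 := by
    rw [Finset.sum_apply]
    rw [Finset.sum_eq_single i]
    · by_cases hp : PipeAbove ν T (i : ℕ) (pos k) <;> simp [hp]
    · intro b _ hb
      have hib : i ≠ b := fun he => hb he.symm
      by_cases hp : PipeAbove ν T (b : ℕ) (pos k) <;>
        simp [hp, Pi.single_apply, hib]
    · intro hni
      exact absurd (Finset.mem_univ i) hni
  rw [hRHS]
  -- basic data of the point
  have hpk : pos k ∈ Anu ν := by rw [← hrange]; exact ⟨k, rfl⟩
  have hb := Anu_bounds ν hpk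
  set X := (pos k).1 with hXdef
  set Y := (pos k).2 with hYdef
  set x := X.toNat with hxdef
  have hxX : ((x:ℕ):ℤ) = X := by omega
  have hwx : x ≤ ν.count false := by omega
  set d := distTL ν (pos k) with hddef
  have hdZ : (d:ℤ) = X + (ν.count true : ℤ) - Y := by
    rw [hddef, distTL]
    omega
  -- the two permutations
  set σ := colPerm ν N pos I x with hσdef
  set τ : Equiv.Perm (Fin N) :=
    (((List.finRange m).filter fun a =>
        decide ((pos a).1 = X ∧ (pos a).2 < Y ∧ a ∉ I)).map
      fun a => nuLetter N ν (pos a)).prod with hτdef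
  -- split of the prefix word
  have hsplit0 : ((List.finRange m).filter fun a => decide (a < k ∧ a ∉ I))
      = ((List.finRange m).filter fun a => decide ((pos a).1 < ((x:ℕ):ℤ) ∧ a ∉ I))
        ++ ((List.finRange m).filter fun a =>
            decide ((pos a).1 = X ∧ (pos a).2 < Y ∧ a ∉ I)) := by
    apply filter_split
    · intro a _
      rw [← Bool.decide_or]
      apply decide_eq_decide.mpr
      rw [hxX]
      constructor
      · rintro ⟨hak, hi⟩
        rcases (hord a k).mp hak with hlt | ⟨heq, hrow⟩
        · exact Or.inl ⟨hlt, hi⟩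
        · exact Or.inr ⟨heq, hrow, hi⟩
      · rintro (⟨hlt, hi⟩ | ⟨heq, hrow, hi⟩)
        · exact ⟨(hord a k).mpr (Or.inl hlt), hi⟩
        · exact ⟨(hord a k).mpr (Or.inr ⟨heq, hrow⟩), hi⟩
    · intro a _
      rintro ⟨h1, h2⟩
      rw [decide_eq_true_eq] at h1 h2
      rw [hxX] at h1
      omega
    · apply (List.pairwise_lt_finRange m).imp
      intro a b hab
      rintro ⟨hqa, hpb⟩
      rw [decide_eq_true_eq] at hqa hpb
      rw [hxX] at hpb
      have : b < a := (hord b a).mpr (Or.inl (by omega))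
      exact absurd this (lt_asymm hab)
  have hsplit : nuPrefixPerm N ν pos I k = σ * τ := by
    rw [nuPrefixPerm, hsplit0, List.map_append, List.prod_append, hσdef, colPerm, hτdef]
  -- τ fixes the positions ≤ d
  have hτfix : ∀ u : Fin N, (u:ℕ) ≤ d → τ u = u := by
    intro u hu
    rw [hτdef]
    apply prod_fix_le _ d _ u hu
    intro g hg v hv
    obtain ⟨a, ha, hga⟩ := List.mem_map.mp hg
    rw [List.mem_filter, decide_eq_true_eq] at ha
    obtain ⟨-, hcol, hrow, -⟩ := ha
    have hpa : pos a ∈ Anu ν := by rw [← hrange]; exact ⟨a, rfl⟩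
    have hba := Anu_bounds ν hpa
    have hda : d < distTL ν (pos a) := by
      rw [hddef, distTL, distTL]
      rw [hcol]
      omega
    rw [← hga, nuLetter]
    exact simpleT_fix v (by omega)
  have hτinv : ∀ u : Fin N, ((τ⁻¹ u : Fin N):ℕ) ≤ d ↔ (u:ℕ) ≤ d := by
    intro u
    constructor
    · intro hle
      have : τ (τ⁻¹ u) = τ⁻¹ u := hτfix _ hle
      rw [show τ (τ⁻¹ u) = u from τ.apply_symm_apply u] at this
      rw [← this] at hle
      exact hle
    · intro hle
      have h1 : τ⁻¹ (τ u) = u := τ.symm_apply_apply u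
      rw [hτfix u hle] at h1
      rw [h1]
      exact hle
  -- the invariant at the start of column x
  have hsinv := sinv ν T N pos I hN hrange hord hI x hwx (σ⁻¹ i)
  rw [show σ (σ⁻¹ i) = i from σ.apply_symm_apply i] at hsinv
  -- pipes above ↔ position in σ
  have hposk : pos k = (((x:ℕ):ℤ), Y) := by
    rw [hxX]
  have hpipe : PipeAbove ν T (i : ℕ) (pos k) ↔ ((σ⁻¹ i : Fin N):ℕ) ≤ d := by
    rw [hposk, PipeAbove_iff, hsinv]
    omega
  -- conclude
  rw [weightFn, fundW, hsplit]
  have hinvapp : ((σ * τ)⁻¹ i) = τ⁻¹ (σ⁻¹ i) := by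
    rw [mul_inv_rev]
    rfl
  rw [hinvapp]
  by_cases hc : ((σ⁻¹ i : Fin N):ℕ) ≤ d
  · rw [if_pos ((hτinv _).mpr hc), if_pos (hpipe.mpr hc)]
  · rw [if_neg (fun hcon => hc ((hτinv _).mp hcon)), if_neg (fun hcon => hc (hpipe.mp hcon))]
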